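/- A group G satisfies the disjunctive law (∀ x y, x² = 1 ∨ y² = 1 ∨ xy = yx) if and only if either G is abelian, or G has an abelian subgroup A of index 2 such that every element of G \ A acts on A by inversion (i.e., for all b ∉ A and a ∈ A, b⁻¹ab = a⁻¹, and every element outside A is an involution). -/
import Mathlib

theorem stmt_16 (G : Type*) [Group G] :
    (∀ x y : G, x ^ 2 = 1 ∨ y ^ 2 = 1 ∨ x * y = y * x) ↔
      ((∀ x y : G, x * y = y * x) ∨
        ∃ A : Subgroup G, A.index = 2 ∧ (∀ a ∈ A, ∀ a' ∈ A, a * a' = a' * a) ∧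
          ∀ b : G, b ∉ A → b ^ 2 = 1 ∧ ∀ a ∈ A, b⁻¹ * a * b = a⁻¹) := by
  constructor
  · intro h
    by_cases hab : ∀ x y : G, x * y = y * x
    · exact Or.inl hab
    right
    push_neg at hab
    obtain ⟨u, v, huv⟩ := hab
    have hs0 : ∃ s : G, s ^ 2 ≠ 1 := by
      by_contra hc
      push_neg at hc
      apply huv
      have h2 : ∀ x : G, x * x = 1 := by
        intro x; have := hc x; rwa [sq] at this
      have key : (u * v) * (u * v) = 1 := h2 _
      calc u * v = u * ((u * v) * (u * v)) * v := by rw [key]; group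
        _ = (u * u) * (v * u) * (v * v) := by group
        _ = v * u := by rw [h2, h2]; group
    obtain ⟨s₀, hs₀⟩ := hs0
    set S : Set G := {y : G | y ^ 2 ≠ 1} with hSdef
    set A : Subgroup G := Subgroup.centralizer S with hAdef
    have memA : ∀ x : G, x ∈ A ↔ ∀ t : G, t ^ 2 ≠ 1 → t * x = x * t := by
      intro x; exact Subgroup.mem_centralizer_iff
    have hSA : ∀ s : G, s ^ 2 ≠ 1 → s ∈ A := by
      intro s hs
      rw [memA]
      intro t ht
      rcases h t s with h1 | h1 | h1
      · exact absurd h1 ht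
      · exact absurd h1 hs
      · exact h1
    -- A is abelian
    have hAab : ∀ a ∈ A, ∀ a' ∈ A, a * a' = a' * a := by
      intro a ha a' ha'
      by_cases h1 : a ^ 2 = 1
      · have hcs : s₀ * a = a * s₀ := (memA a).mp ha s₀ hs₀
        have hc2 : (a * s₀) ^ 2 ≠ 1 := by
          intro hc
          apply hs₀
          have : (a * s₀) ^ 2 = a ^ 2 * s₀ ^ 2 := by
            rw [sq, sq, sq, mul_assoc a s₀ (a * s₀), ← mul_assoc s₀ a s₀, hcs]
            group
          rw [this, h1, one_mul] at hc
          exact hc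
        have h3 : (a * s₀) * a' = a' * (a * s₀) := (memA a').mp ha' _ hc2
        have h4 : s₀ * a' = a' * s₀ := (memA a').mp ha' s₀ hs₀
        have h5 : a * a' * s₀ = a' * a * s₀ := by
          calc a * a' * s₀ = a * (a' * s₀) := by group
            _ = a * (s₀ * a') := by rw [h4]
            _ = (a * s₀) * a' := by group
            _ = a' * (a * s₀) := h3
            _ = a' * a * s₀ := by group
        exact mul_right_cancel h5
      · exact (memA a').mp ha' a h1
    -- elements outside A
    have hOut : ∀ b : G, b ∉ A → b ^ 2 = 1 ∧ ∀ a ∈ A, b⁻¹ * a * b = a⁻¹ := by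
      intro b hb
      have hex : ∃ s : G, s ^ 2 ≠ 1 ∧ ¬ (s * b = b * s) := by
        by_contra hc
        push_neg at hc
        exact hb ((memA b).mpr hc)
      obtain ⟨s, hs, hbs⟩ := hex
      have hb2 : b ^ 2 = 1 := by
        rcases h b s with h1 | h1 | h1
        · exact h1
        · exact absurd h1 hs
        · exact absurd h1.symm hbs
      have hbb : b * b = 1 := by rwa [sq] at hb2
      have hbinv : b⁻¹ = b := by
        rw [eq_comm, eq_inv_iff_mul_eq_one, hbb]
      -- b inverts s
      have hinvs : b⁻¹ * s * b = s⁻¹ := by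
        have hbs2 : (b * s) ^ 2 = 1 := by
          rcases h (b * s) s with h1 | h1 | h1
          · exact h1
          · exact absurd h1 hs
          · exfalso
            have h3 : b * s * s = s * b * s := by rw [mul_assoc s b s]; exact h1
            exact hbs (mul_right_cancel h3).symm
        have hbs2' : (b * s) * (b * s) = 1 := by rw [← sq]; exact hbs2
        rw [hbinv, eq_inv_iff_mul_eq_one, mul_assoc (b * s) b s]
        exact hbs2'
      -- inversion for a ∈ A with a ^ 2 ≠ 1
      have hinvS : ∀ a : G, a ∈ A → a ^ 2 ≠ 1 → b⁻¹ * a * b = a⁻¹ := by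
        intro a ha ha2
        have hnc : ¬ (a * b = b * a) := by
          intro hcom
          have hsa : s * a = a * s := (memA a).mp ha s hs
          -- a*b does not commute with s
          have hnc2 : ¬ ((a * b) * s = s * (a * b)) := by
            intro hc
            apply hbs
            have : a * (b * s) = a * (s * b) := by
              calc a * (b * s) = (a * b) * s := by group
                _ = s * (a * b) := hc
                _ = (s * a) * b := by group
                _ = (a * s) * b := by rw [hsa]
                _ = a * (s * b) := by group
            exact (mul_left_cancel this).symm
          have hab2 : (a * b) ^ 2 = 1 := by
            rcases h (a * b) s with h1 | h1 | h1
            · exact h1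
            · exact absurd h1 hs
            · exact absurd h1 hnc2
          apply ha2
          have : (a * b) ^ 2 = a ^ 2 * (b * b) := by
            rw [sq, sq, mul_assoc a b (a * b), ← mul_assoc b a b, ← hcom]
            group
          rw [this, hbb, mul_one] at hab2
          exact hab2
        -- so b, a don't commute: (b*a)^2 = 1
        have hba2 : (b * a) ^ 2 = 1 := by
          rcases h (b * a) a with h1 | h1 | h1
          · exact h1
          · exact absurd h1 ha2
          · exfalso
            have h3 : b * a * a = a * b * a := by rw [mul_assoc a b a]; exact h1
            exact hnc (mul_right_cancel h3).symm
        have hba2' : (b * a) * (b * a) = 1 := by rw [← sq]; exact hba2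
        rw [hbinv, eq_inv_iff_mul_eq_one, mul_assoc (b * a) b a]
        exact hba2'
      refine ⟨hb2, ?_⟩
      intro a ha
      by_cases ha2 : a ^ 2 = 1
      · -- a is an involution in A; use c = a * s
        have hsa : s * a = a * s := (memA a).mp ha s hs
        have haa : a * a = 1 := by rwa [sq] at ha2
        have hainv : a⁻¹ = a := by rw [eq_comm, eq_inv_iff_mul_eq_one, haa]
        have hc2 : (a * s) ^ 2 ≠ 1 := by
          intro hc
          apply hs
          have : (a * s) ^ 2 = (a * a) * (s * s) := by
            rw [sq, mul_assoc a s (a * s), ← mul_assoc s a s, hsa]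
            group
          rw [this, haa, one_mul, ← sq] at hc
          exact hc
        have hcA : a * s ∈ A := hSA _ hc2
        have h1 : b⁻¹ * (a * s) * b = (a * s)⁻¹ := hinvS _ hcA hc2
        have h2 : b⁻¹ * a * b = (a * s)⁻¹ * (b⁻¹ * s * b)⁻¹ := by
          rw [← h1]; group
        calc b⁻¹ * a * b = (a * s)⁻¹ * s := by rw [h2, hinvs, inv_inv]
          _ = s⁻¹ * (a⁻¹ * s) := by rw [mul_inv_rev]; group
          _ = s⁻¹ * (a * s) := by rw [hainv]
          _ = s⁻¹ * (s * a) := by rw [hsa]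
          _ = a := by group
          _ = a⁻¹ := hainv.symm
      · exact hinvS a ha ha2
    -- A ≠ ⊤
    have hbex : ∃ b : G, b ∉ A := by
      by_contra hc
      push_neg at hc
      exact huv (hAab u (hc u) v (hc v))
    obtain ⟨b₀, hb₀⟩ := hbex
    -- product of two outsiders is inside
    have hprod : ∀ x y : G, x ∉ A → y ∉ A → x * y ∈ A := by
      intro x y hx hy
      rw [memA]
      intro t ht
      have htA : t ∈ A := hSA t ht
      have hx' := hOut x hx
      have hy' := hOut y hy
      have h1 : x⁻¹ * t * x = t⁻¹ := hx'.2 t htA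
      have h2 : y⁻¹ * t * y = t⁻¹ := hy'.2 t htA
      have key : (x * y)⁻¹ * t * (x * y) = t := by
        calc (x * y)⁻¹ * t * (x * y) = y⁻¹ * (x⁻¹ * t * x) * y := by group
          _ = y⁻¹ * t⁻¹ * y := by rw [h1]
          _ = (y⁻¹ * t * y)⁻¹ := by group
          _ = t := by rw [h2, inv_inv]
      have : t * (x * y) = (x * y) * ((x * y)⁻¹ * t * (x * y)) := by group
      rw [key] at this
      exact this
    refine ⟨A, ?_, hAab, hOut⟩
    rw [Subgroup.index_eq_two_iff]
    refine ⟨b₀, fun g => ?_⟩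
    by_cases hg : g ∈ A
    · refine Or.inr ⟨hg, ?_⟩
      intro hgb
      exact hb₀ (by
        have : g⁻¹ * (g * b₀) ∈ A := A.mul_mem (A.inv_mem hg) hgb
        rwa [inv_mul_cancel_left] at this)
    · exact Or.inl ⟨hprod g b₀ hg hb₀, hg⟩
  · rintro (habel | ⟨A, hidx, hAab, hOut⟩) x y
    · exact Or.inr (Or.inr (habel x y))
    · by_cases hx : x ∈ A
      · by_cases hy : y ∈ A
        · exact Or.inr (Or.inr (hAab x hx y hy))
        · exact Or.inr (Or.inl (hOut y hy).1)
      · exact Or.inl (hOut x hx).1
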